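/- Let G be a graph on n vertices with k ≤ n, and suppose that the complement of G contains two edges (non-edges of G) {u,v} and {w,x} with {u,v} ∩ {w,x} = ∅, and that k ≤ n − 2. Then the graph B_{≥k}(G) has no universal vertex. -/

import Mathlib

open Finset

variable {V : Type*} [Fintype V] [DecidableEq V]

def IsISP (G : SimpleGraph V) (P : Finpartition (univ : Finset V)) : Prop :=
  ∀ A ∈ P.parts, ∀ u ∈ A, ∀ v ∈ A, ¬ G.Adj u v

def samePart (P : Finpartition (univ : Finset V)) (u v : V) : Prop :=
  ∃ A ∈ P.parts, u ∈ A ∧ v ∈ A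

def MovedBy (P Q : Finpartition (univ : Finset V)) (x : V) : Prop :=
  P ≠ Q ∧ ∀ u v : V, u ≠ x → v ≠ x → (samePart P u v ↔ samePart Q u v)

def BellGraph (G : SimpleGraph V) :
    SimpleGraph {P : Finpartition (univ : Finset V) // IsISP G P} where
  Adj P Q := ∃ x, MovedBy P.1 Q.1 x
  symm := by
    constructor
    rintro P Q ⟨x, hne, h⟩
    exact ⟨x, Ne.symm hne, fun u v hu hv => (h u v hu hv).symm⟩
  loopless := by
    constructor
    rintro P ⟨x, hne, _⟩
    exact hne rfl

def UpperBell (G : SimpleGraph V) (k : ℕ) :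
    SimpleGraph {P : Finpartition (univ : Finset V) // IsISP G P ∧ k ≤ P.parts.card} where
  Adj P Q := ∃ x, MovedBy P.1 Q.1 x
  symm := by
    constructor
    rintro P Q ⟨x, hne, h⟩
    exact ⟨x, Ne.symm hne, fun u v hu hv => (h u v hu hv).symm⟩
  loopless := by
    constructor
    rintro P ⟨x, hne, _⟩
    exact hne rfl

def IsUniversal (G : SimpleGraph V) (v : V) : Prop :=
  ∀ w, w ≠ v → G.Adj v w


section Aux

def myRel (u v w x : V) (c1 c2 : Bool) (a b : V) : Prop :=
  a = b ∨ (c1 = true ∧ ((a = u ∧ b = v) ∨ (a = v ∧ b = u)))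
    ∨ (c2 = true ∧ ((a = w ∧ b = x) ∨ (a = x ∧ b = w)))

instance (u v w x : V) (c1 c2 : Bool) : DecidableRel (myRel u v w x c1 c2) :=
  fun _ _ => by unfold myRel; infer_instance

omit [Fintype V] [DecidableEq V] in
lemma myRel_equiv (u v w x : V) (d1 : u ≠ w) (d2 : u ≠ x) (d3 : v ≠ w) (d4 : v ≠ x)
    (c1 c2 : Bool) : Equivalence (myRel u v w x c1 c2) where
  refl _ := Or.inl rfl
  symm := by
    rintro a b (rfl | ⟨hc, (⟨rfl, rfl⟩ | ⟨rfl, rfl⟩)⟩ | ⟨hc, (⟨rfl, rfl⟩ | ⟨rfl, rfl⟩)⟩) <;>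
      simp_all [myRel]
  trans := by
    rintro a b c (rfl | ⟨hc, (⟨rfl, rfl⟩ | ⟨rfl, rfl⟩)⟩ | ⟨hc, (⟨rfl, rfl⟩ | ⟨rfl, rfl⟩)⟩) <;>
      rintro (rfl | ⟨hc', (⟨h1, h2⟩ | ⟨h1, h2⟩)⟩ | ⟨hc', (⟨h1, h2⟩ | ⟨h1, h2⟩)⟩) <;>
      simp_all [myRel]

lemma samePart_iff_mem_part (P : Finpartition (univ : Finset V)) (a b : V) :
    samePart P a b ↔ b ∈ P.part a := by
  constructor
  · rintro ⟨A, hA, haA, hbA⟩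
    rwa [P.part_eq_of_mem hA haA]
  · intro h
    exact ⟨P.part a, (P.part_mem.2 (mem_univ a)), P.mem_part (mem_univ a), h⟩

def mySetoid (u v w x : V) (d1 : u ≠ w) (d2 : u ≠ x) (d3 : v ≠ w) (d4 : v ≠ x)
    (c1 c2 : Bool) : Setoid V :=
  ⟨myRel u v w x c1 c2, myRel_equiv u v w x d1 d2 d3 d4 c1 c2⟩

instance (u v w x : V) (d1 : u ≠ w) (d2 : u ≠ x) (d3 : v ≠ w) (d4 : v ≠ x)
    (c1 c2 : Bool) : DecidableRel ⇑(mySetoid u v w x d1 d2 d3 d4 c1 c2) :=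
  fun a b => by
    change Decidable (myRel u v w x c1 c2 a b)
    unfold myRel; infer_instance

def myPart (u v w x : V) (d1 : u ≠ w) (d2 : u ≠ x) (d3 : v ≠ w) (d4 : v ≠ x)
    (c1 c2 : Bool) : Finpartition (univ : Finset V) :=
  Finpartition.ofSetoid (mySetoid u v w x d1 d2 d3 d4 c1 c2)

lemma mem_part_myPart (u v w x : V) (d1 : u ≠ w) (d2 : u ≠ x) (d3 : v ≠ w) (d4 : v ≠ x)
    (c1 c2 : Bool) (a b : V) :
    b ∈ (myPart u v w x d1 d2 d3 d4 c1 c2).part a ↔ myRel u v w x c1 c2 a b :=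
  Finpartition.mem_part_ofSetoid_iff_rel (s := mySetoid u v w x d1 d2 d3 d4 c1 c2)

lemma samePart_myPart (u v w x : V) (d1 : u ≠ w) (d2 : u ≠ x) (d3 : v ≠ w) (d4 : v ≠ x)
    (c1 c2 : Bool) (a b : V) :
    samePart (myPart u v w x d1 d2 d3 d4 c1 c2) a b ↔ myRel u v w x c1 c2 a b :=
  (samePart_iff_mem_part _ a b).trans (mem_part_myPart u v w x d1 d2 d3 d4 c1 c2 a b)

lemma samePart_myPart_uv (u v w x : V) (huv : u ≠ v)
    (d1 : u ≠ w) (d2 : u ≠ x) (d3 : v ≠ w) (d4 : v ≠ x) (c1 c2 : Bool) :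
    samePart (myPart u v w x d1 d2 d3 d4 c1 c2) u v ↔ c1 = true := by
  rw [samePart_myPart]
  constructor
  · rintro (h | ⟨hc, _⟩ | ⟨hc, (⟨h1, h2⟩ | ⟨h1, h2⟩)⟩)
    · exact absurd h huv
    · exact hc
    · exact absurd h1 d1
    · exact absurd h1 d2
  · intro hc
    exact Or.inr (Or.inl ⟨hc, Or.inl ⟨rfl, rfl⟩⟩)

lemma samePart_myPart_wx (u v w x : V) (hwx : w ≠ x)
    (d1 : u ≠ w) (d2 : u ≠ x) (d3 : v ≠ w) (d4 : v ≠ x) (c1 c2 : Bool) :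
    samePart (myPart u v w x d1 d2 d3 d4 c1 c2) w x ↔ c2 = true := by
  rw [samePart_myPart]
  constructor
  · rintro (h | ⟨hc, (⟨h1, h2⟩ | ⟨h1, h2⟩)⟩ | ⟨hc, _⟩)
    · exact absurd h hwx
    · exact absurd h1.symm d1
    · exact absurd h1.symm d3
    · exact hc
  · intro hc
    exact Or.inr (Or.inr ⟨hc, Or.inl ⟨rfl, rfl⟩⟩)

lemma isISP_myPart (G : SimpleGraph V) (u v w x : V)
    (e1 : ¬ G.Adj u v) (e2 : ¬ G.Adj w x)
    (d1 : u ≠ w) (d2 : u ≠ x) (d3 : v ≠ w) (d4 : v ≠ x) (c1 c2 : Bool) :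
    IsISP G (myPart u v w x d1 d2 d3 d4 c1 c2) := by
  intro A hA a ha b hb hadj
  set Q := myPart u v w x d1 d2 d3 d4 c1 c2 with hQ
  have hrel : myRel u v w x c1 c2 a b := by
    rw [← mem_part_myPart u v w x d1 d2 d3 d4 c1 c2 a b, ← hQ,
      Q.part_eq_of_mem hA ha]
    exact hb
  rcases hrel with rfl | ⟨_, (⟨rfl, rfl⟩ | ⟨rfl, rfl⟩)⟩ | ⟨_, (⟨rfl, rfl⟩ | ⟨rfl, rfl⟩)⟩
  · exact G.loopless.irrefl a hadj
  · exact e1 hadj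
  · exact e1 (hadj.symm)
  · exact e2 hadj
  · exact e2 (hadj.symm)

lemma card_myPart (u v w x : V) (hvx : v ≠ x)
    (d1 : u ≠ w) (d2 : u ≠ x) (d3 : v ≠ w) (d4 : v ≠ x) (c1 c2 : Bool) :
    Fintype.card V - 2 ≤ (myPart u v w x d1 d2 d3 d4 c1 c2).parts.card := by
  set Q := myPart u v w x d1 d2 d3 d4 c1 c2 with hQ
  have hinj : Set.InjOn Q.part ((univ \ {v, x} : Finset V) : Set V) := by
    intro a ha a' ha' h
    simp only [coe_sdiff, coe_univ, Set.mem_diff, coe_insert, coe_singleton,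
      Set.mem_insert_iff, Set.mem_singleton_iff] at ha ha'
    have hrel : myRel u v w x c1 c2 a a' := by
      rw [← mem_part_myPart u v w x d1 d2 d3 d4 c1 c2 a a', ← hQ, h]
      exact Q.mem_part (mem_univ a')
    rcases hrel with h | ⟨_, (⟨h1, h2⟩ | ⟨h1, h2⟩)⟩ | ⟨_, (⟨h1, h2⟩ | ⟨h1, h2⟩)⟩
    · exact h
    · exact absurd h2 (by tauto)
    · exact absurd h1 (by tauto)
    · exact absurd h2 (by tauto)
    · exact absurd h1 (by tauto)
  have hmap : ∀ a ∈ (univ \ {v, x} : Finset V), Q.part a ∈ Q.parts :=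
    fun a _ => (Q.part_mem.2 (mem_univ a))
  have hcard := card_le_card_of_injOn Q.part hmap hinj
  have h2 : (univ \ {v, x} : Finset V).card = Fintype.card V - 2 := by
    rw [card_sdiff_of_subset (subset_univ _), card_univ]
    congr 1
    rw [card_insert_of_notMem (by simp [hvx]), card_singleton]
  omega

lemma key_lemma (G : SimpleGraph V) (k : ℕ)
    (u v w x : V) (huv : u ≠ v) (hwx : w ≠ x)
    (e1 : ¬ G.Adj u v) (e2 : ¬ G.Adj w x)
    (d1 : u ≠ w) (d2 : u ≠ x) (d3 : v ≠ w) (d4 : v ≠ x)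
    (hk2 : k ≤ Fintype.card V - 2)
    (P : {P : Finpartition (univ : Finset V) // IsISP G P ∧ k ≤ P.parts.card})
    (c1 c2 : Bool)
    (m1 : ¬ (samePart P.1 u v ↔ c1 = true))
    (m2 : ¬ (samePart P.1 w x ↔ c2 = true)) :
    ∃ Q, Q ≠ P ∧ ¬ (UpperBell G k).Adj P Q := by
  refine ⟨⟨myPart u v w x d1 d2 d3 d4 c1 c2,
    isISP_myPart G u v w x e1 e2 d1 d2 d3 d4 c1 c2,
    le_trans hk2 (card_myPart u v w x d4 d1 d2 d3 d4 c1 c2)⟩, ?_, ?_⟩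
  · intro h
    apply m1
    rw [← congrArg Subtype.val h]
    exact samePart_myPart_uv u v w x huv d1 d2 d3 d4 c1 c2
  · rintro ⟨y, _, hmv⟩
    have hyu : y = u ∨ y = v := by
      by_contra hy
      push_neg at hy
      exact m1 ((hmv u v (fun h => hy.1 h.symm) (fun h => hy.2 h.symm)).trans
        (samePart_myPart_uv u v w x huv d1 d2 d3 d4 c1 c2))
    have hyw : y = w ∨ y = x := by
      by_contra hy
      push_neg at hy
      exact m2 ((hmv w x (fun h => hy.1 h.symm) (fun h => hy.2 h.symm)).trans
        (samePart_myPart_wx u v w x hwx d1 d2 d3 d4 c1 c2))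
    rcases hyu with rfl | rfl <;> rcases hyw with h | h
    · exact d1 h
    · exact d2 h
    · exact d3 h
    · exact d4 h

end Aux

theorem stmt19 (G : SimpleGraph V) (k : ℕ) (hk : k ≤ Fintype.card V)
    (u v w x : V) (huv : u ≠ v) (hwx : w ≠ x)
    (e1 : ¬ G.Adj u v) (e2 : ¬ G.Adj w x)
    (d1 : u ≠ w) (d2 : u ≠ x) (d3 : v ≠ w) (d4 : v ≠ x)
    (hk2 : k ≤ Fintype.card V - 2) :
    ∀ P : {P : Finpartition (univ : Finset V) // IsISP G P ∧ k ≤ P.parts.card},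
      ∃ Q, Q ≠ P ∧ ¬ (UpperBell G k).Adj P Q := by
  intro P
  by_cases h1 : samePart P.1 u v <;> by_cases h2 : samePart P.1 w x
  · exact key_lemma G k u v w x huv hwx e1 e2 d1 d2 d3 d4 hk2 P false false
      (by simp [h1]) (by simp [h2])
  · exact key_lemma G k u v w x huv hwx e1 e2 d1 d2 d3 d4 hk2 P false true
      (by simp [h1]) (by simp [h2])
  · exact key_lemma G k u v w x huv hwx e1 e2 d1 d2 d3 d4 hk2 P true false
      (by simp [h1]) (by simp [h2])
  · exact key_lemma G k u v w x huv hwx e1 e2 d1 d2 d3 d4 hk2 P true true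
      (by simp [h1]) (by simp [h2])
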